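/- Any SLP of size g over an alphabet Σ produces a word w such that the number of distinct factors of w of length ℓ is at most g·ℓ; consequently, if a word u has at least c·k² distinct factors of length Θ(log k), then g(u) ∈ Ω(k²/log k). -/

import Mathlib

/-- A straight-line program over alphabet `α`: nonterminals `0, ..., n-1`, each with a
single nonempty right-hand side referring only to smaller nonterminals (acyclicity). -/
structure SLP (α : Type) where
  n : ℕ
  rhs : Fin n → List (Fin n ⊕ α)
  start : Fin n
  dec : ∀ i j, Sum.inl j ∈ rhs i → (j : ℕ) < (i : ℕ)
  ne : ∀ i, rhs i ≠ []

/-- The word derived by nonterminal `i`. -/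
def SLP.val {α : Type} (G : SLP α) (i : Fin G.n) : List α :=
  ((G.rhs i).attach.map (fun s =>
    match h : s.1 with
    | Sum.inl j => G.val j
    | Sum.inr a => [a])).flatten
termination_by (i : ℕ)
decreasing_by exact G.dec i _ (h ▸ s.2)

/-- The size of an SLP: total length of all right-hand sides. -/
def SLP.size {α : Type} (G : SLP α) : ℕ := ∑ i, (G.rhs i).length

def SLP.produces {α : Type} (G : SLP α) (w : List α) : Prop := G.val G.start = w

/-- `gsize w` is the size of a smallest SLP producing `w`. -/
noncomputable def gsize {α : Type} (w : List α) : ℕ :=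
  sInf {s | ∃ G : SLP α, G.produces w ∧ G.size = s}

/-! ### Auxiliary definitions and lemmas -/

def SLP.pieces {α : Type} (G : SLP α) (i : Fin G.n) : List (List α) :=
  (G.rhs i).map (fun s => match s with | Sum.inl j => G.val j | Sum.inr a => [a])

lemma SLP.val_eq {α : Type} (G : SLP α) (i : Fin G.n) :
    G.val i = (G.pieces i).flatten := by
  rw [SLP.val, SLP.pieces]
  congr 1
  have : ((G.rhs i).attach.map (fun s =>
      match h : s.1 with
      | Sum.inl j => G.val j
      | Sum.inr a => [a])) = ((G.rhs i).attach.map (fun s =>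
      (fun x => match x with | Sum.inl j => G.val j | Sum.inr a => [a]) s.1)) := by
    apply List.map_congr_left
    rintro ⟨s, hs⟩ _
    cases s <;> rfl
  rw [this]
  exact List.attach_map_val (l := G.rhs i)
    (f := fun x => match x with | Sum.inl j => G.val j | Sum.inr a => [a])

lemma SLP.pieces_length {α : Type} (G : SLP α) (i : Fin G.n) :
    (G.pieces i).length = (G.rhs i).length := by simp [SLP.pieces]

/-- find the piece containing position `p` -/
lemma find_piece {α : Type} (L : List (List α)) (p : ℕ) (hp : p < L.flatten.length) :
    ∃ t, t < L.length ∧ (L.take t).flatten.length ≤ p ∧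
      p < (L.take (t + 1)).flatten.length := by
  induction L generalizing p with
  | nil => simp at hp
  | cons x xs ih =>
    by_cases h : p < x.length
    · exact ⟨0, by simp, by simp, by simpa using h⟩
    · simp only [List.flatten_cons, List.length_append] at hp
      obtain ⟨t, ht, hb, he⟩ := ih (p - x.length) (by omega)
      refine ⟨t + 1, by simpa using ht, ?_, ?_⟩
      · simp only [List.take_succ_cons, List.flatten_cons, List.length_append]
        omega
      · simp only [List.take_succ_cons, List.flatten_cons, List.length_append]
        omega

lemma take_succ_flatten {α : Type} (L : List (List α)) (t : ℕ) (ht : t < L.length) :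
    (L.take (t + 1)).flatten = (L.take t).flatten ++ L[t] := by
  rw [List.take_succ, List.getElem?_eq_getElem ht]
  simp only [Option.toList_some, List.flatten_append, List.flatten_cons,
    List.flatten_nil, List.append_nil]

lemma within_piece {α : Type} (L : List (List α)) (t : ℕ) (ht : t < L.length)
    (p ℓ : ℕ) (hb : (L.take t).flatten.length ≤ p)
    (he : p + ℓ ≤ (L.take (t + 1)).flatten.length) :
    (L.flatten.drop p).take ℓ =
      ((L[t].drop (p - (L.take t).flatten.length)).take ℓ) := by
  have hdecomp : L.flatten = (L.take t).flatten ++ (L[t] ++ (L.drop (t + 1)).flatten) := by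
    conv_lhs => rw [← List.take_append_drop t L]
    rw [List.flatten_append, List.drop_eq_getElem_cons ht, List.flatten_cons]
  have hp : p = (L.take t).flatten.length + (p - (L.take t).flatten.length) := by omega
  have he' : (L.take (t + 1)).flatten.length = (L.take t).flatten.length + L[t].length := by
    rw [take_succ_flatten L t ht]; simp
  have hlen : ℓ ≤ (L[t].drop (p - (L.take t).flatten.length)).length := by
    simp only [List.length_drop]; omega
  conv_lhs => rw [hdecomp, hp, List.drop_length_add_append, List.drop_append]
  rw [List.take_append_of_le_length hlen]

/-- end position of piece `t` in rule `i` -/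
def SLP.ends {α : Type} (G : SLP α) (i : Fin G.n) (t : ℕ) : ℕ :=
  ((G.pieces i).take (t + 1)).flatten.length

def SLP.decode {α : Type} (G : SLP α) (ℓ : ℕ)
    (c : Σ i : Fin G.n, Fin (G.rhs i).length × Fin ℓ) : List α :=
  ((G.val c.1).drop (G.ends c.1 c.2.1 - 1 - c.2.2)).take ℓ

lemma SLP.step {α : Type} (G : SLP α) {ℓ : ℕ} (hℓ : 1 ≤ ℓ) (i : Fin G.n)
    (IH : ∀ j : Fin G.n, (j : ℕ) < (i : ℕ) → ∀ p, p + ℓ ≤ (G.val j).length →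
      ∃ c, G.decode ℓ c = ((G.val j).drop p).take ℓ) :
    ∀ p, p + ℓ ≤ (G.val i).length →
      ∃ c, G.decode ℓ c = ((G.val i).drop p).take ℓ := by
  intro p hp
  have hplen : p < (G.pieces i).flatten.length := by
    rw [← G.val_eq]; omega
  obtain ⟨t, ht, hb, he⟩ := find_piece _ p hplen
  have ht' : t < (G.rhs i).length := by rwa [G.pieces_length] at ht
  have he' : ((G.pieces i).take (t + 1)).flatten.length
      = ((G.pieces i).take t).flatten.length + (G.pieces i)[t].length := by
    rw [take_succ_flatten _ t ht]; simp
  by_cases hc : ((G.pieces i).take (t + 1)).flatten.length ≤ p + ℓ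
  · refine ⟨⟨i, ⟨t, ht'⟩, ⟨((G.pieces i).take (t + 1)).flatten.length - 1 - p, by omega⟩⟩, ?_⟩
    simp only [SLP.decode, SLP.ends]
    have hidx : ((G.pieces i).take (t + 1)).flatten.length - 1 -
        (((G.pieces i).take (t + 1)).flatten.length - 1 - p) = p := by omega
    rw [hidx]
  · push_neg at hc
    have hwithin := within_piece (G.pieces i) t ht p ℓ hb (le_of_lt hc)
    have hpt : (G.pieces i)[t] =
        (match (G.rhs i)[t] with | Sum.inl j => G.val j | Sum.inr a => [a]) := by
      simp [SLP.pieces]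
    rcases hsym : (G.rhs i)[t]'ht' with j | a
    · have hj : (j : ℕ) < (i : ℕ) := G.dec i j (by rw [← hsym]; exact List.getElem_mem ht')
      have hval : (G.pieces i)[t] = G.val j := by rw [hpt, hsym]
      have hlen : (p - ((G.pieces i).take t).flatten.length) + ℓ ≤ (G.val j).length := by
        rw [← hval]; omega
      obtain ⟨c, hcdec⟩ := IH j hj _ hlen
      refine ⟨c, ?_⟩
      rw [hcdec, G.val_eq i, hwithin, hval]
    · exfalso
      have h1 : (G.pieces i)[t].length = 1 := by rw [hpt, hsym]; rfl
      omega

lemma SLP.main {α : Type} (G : SLP α) {ℓ : ℕ} (hℓ : 1 ≤ ℓ) (i : Fin G.n) :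
    ∀ p, p + ℓ ≤ (G.val i).length →
      ∃ c, G.decode ℓ c = ((G.val i).drop p).take ℓ := by
  have H : ∀ N (i : Fin G.n), (i : ℕ) < N → ∀ p, p + ℓ ≤ (G.val i).length →
      ∃ c, G.decode ℓ c = ((G.val i).drop p).take ℓ := by
    intro N
    induction N with
    | zero => intro i hi; omega
    | succ N ih =>
      intro i _hi
      exact G.step hℓ i (fun j hj => ih j (by omega))
  exact H ((i : ℕ) + 1) i (by omega)

lemma part1 {α : Type} (G : SLP α) (ℓ : ℕ) (hℓ : 1 ≤ ℓ) :
    {v : List α | v.length = ℓ ∧ v <:+: G.val G.start}.ncard ≤ G.size * ℓ := by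
  have hsub : {v : List α | v.length = ℓ ∧ v <:+: G.val G.start} ⊆
      Set.range (G.decode ℓ) := by
    rintro v ⟨hvlen, s, t, hst⟩
    have hv : v = ((G.val G.start).drop s.length).take ℓ := by
      rw [← hst, List.append_assoc, List.drop_left, ← hvlen, List.take_left]
    have hlen : s.length + ℓ ≤ (G.val G.start).length := by
      rw [← hst]; simp; omega
    obtain ⟨c, hc⟩ := G.main hℓ G.start s.length hlen
    exact ⟨c, by rw [hc, ← hv]⟩
  calc {v : List α | v.length = ℓ ∧ v <:+: G.val G.start}.ncard
      ≤ (Set.range (G.decode ℓ)).ncard :=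
        Set.ncard_le_ncard hsub (Set.finite_range _)
    _ ≤ Fintype.card (Σ i : Fin G.n, Fin (G.rhs i).length × Fin ℓ) := by
        rw [← Set.image_univ]
        refine (Set.ncard_image_le (Set.finite_univ)).trans ?_
        rw [Set.ncard_univ, Nat.card_eq_fintype_card]
    _ = G.size * ℓ := by
        simp [Fintype.card_sigma, SLP.size, Finset.sum_mul]

lemma flatten_map_singleton {α : Type} (l : List α) :
    (l.map fun a => [a]).flatten = l := by
  induction l <;> simp_all

lemma trivial_slp {α : Type} (u : List α) (hu : u ≠ []) :
    ∃ G : SLP α, G.produces u := by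
  have hdec : ∀ i j : Fin 1, Sum.inl j ∈ u.map Sum.inr → (j : ℕ) < (i : ℕ) := by
    intro i j hj; simp [List.mem_map] at hj
  have hne : ∀ _ : Fin 1, u.map (Sum.inr : α → Fin 1 ⊕ α) ≠ [] := fun _ => by simp [hu]
  refine ⟨⟨1, fun _ => u.map Sum.inr, 0, hdec, hne⟩, ?_⟩
  set G : SLP α := ⟨1, fun _ => u.map Sum.inr, 0, hdec, hne⟩ with hG
  show G.val 0 = u
  rw [SLP.val_eq]
  show ((u.map Sum.inr).map
      (fun s => match s with | Sum.inl j => G.val j | Sum.inr a => [a])).flatten = u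
  rw [List.map_map]
  have h2 : ((fun s => match s with | Sum.inl j => G.val j | Sum.inr a => [a]) ∘
      (Sum.inr : α → Fin G.n ⊕ α)) = fun a : α => [a] := funext fun a => rfl
  rw [h2, flatten_map_singleton]

lemma part2 {α : Type} (u : List α) (c d k ℓ : ℕ) (hℓ : 1 ≤ ℓ)
    (hld : ℓ ≤ d * Nat.log 2 k)
    (hcard : c * k ^ 2 ≤ {v : List α | v.length = ℓ ∧ v <:+: u}.ncard) :
    c * k ^ 2 ≤ gsize u * (d * Nat.log 2 k) := by
  by_cases hu : u = []
  · subst hu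
    have hempty : {v : List α | v.length = ℓ ∧ v <:+: ([] : List α)} = ∅ := by
      ext v
      simp only [Set.mem_setOf_eq, Set.mem_empty_iff_false, iff_false, not_and]
      intro hv hinf
      rw [List.infix_nil] at hinf
      subst hinf; simp at hv; omega
    rw [hempty] at hcard
    simp at hcard
    rcases hcard with h | h <;> simp [h]
  · obtain ⟨G0, hG0⟩ := trivial_slp u hu
    have hne : {s | ∃ G : SLP α, G.produces u ∧ G.size = s}.Nonempty := ⟨G0.size, G0, hG0, rfl⟩
    obtain ⟨G, hGp, hGs⟩ := Nat.sInf_mem hne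
    have h1 := part1 G ℓ hℓ
    rw [SLP.produces] at hGp
    rw [hGp] at h1
    calc c * k ^ 2 ≤ {v : List α | v.length = ℓ ∧ v <:+: u}.ncard := hcard
      _ ≤ G.size * ℓ := h1
      _ = gsize u * ℓ := by rw [hGs]; rfl
      _ ≤ gsize u * (d * Nat.log 2 k) := Nat.mul_le_mul_left _ hld

/-- An SLP of size `g` produces a word with at most `g · ℓ` distinct factors of length
`ℓ`; consequently, a word `u` with at least `c · k²` distinct factors of some length
`ℓ ≤ d · log₂ k` satisfies `g(u) ≥ c · k² / (d · log₂ k)`, i.e. `g(u) ∈ Ω(k²/log k)`. -/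
theorem repair_stmt_18 {α : Type} :
    (∀ (G : SLP α) (ℓ : ℕ), 1 ≤ ℓ →
      {v : List α | v.length = ℓ ∧ v <:+: G.val G.start}.ncard ≤ G.size * ℓ) ∧
    (∀ (u : List α) (c d k ℓ : ℕ), 1 ≤ ℓ → ℓ ≤ d * Nat.log 2 k →
      c * k ^ 2 ≤ {v : List α | v.length = ℓ ∧ v <:+: u}.ncard →
      c * k ^ 2 ≤ gsize u * (d * Nat.log 2 k)) :=
  ⟨part1, part2⟩
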